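/- arXiv:math/0701426 — 4 statements merged into one kernel-verified Lean document; each statement's English description precedes it below -/
import Mathlib

section
/- For every real number a with |a| < 1, ∫₀^{2π} log|cos φ − a| dφ = −2π log 2. -/
open MeasureTheory Real

lemma countable_sin_zero : {x : ℝ | Real.sin x = 0}.Countable := by
  have h : {x : ℝ | Real.sin x = 0} = Set.range (fun n : ℤ => (n : ℝ) * π) := by
    ext x
    simp only [Set.mem_setOf_eq, Set.mem_range]
    exact Real.sin_eq_zero_iff
  rw [h]
  exact Set.countable_range _

lemma il_log_abs (a b : ℝ) :
    IntervalIntegrable (fun x => Real.log |x|) volume a b := by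
  have key : ∀ c : ℝ, 0 ≤ c →
      IntervalIntegrable (fun x => Real.log |x|) volume 0 c := by
    intro c hc
    have hg : IntervalIntegrable (fun x : ℝ => 2 * x ^ (-(1/2) : ℝ) + x) volume 0 c :=
      ((intervalIntegral.intervalIntegrable_rpow' (by norm_num)).const_mul 2).add
        (continuous_id.intervalIntegrable _ _)
    refine hg.mono_fun' ?_ ?_
    · exact (Real.measurable_log.comp measurable_abs).aestronglyMeasurable
    · rw [Filter.EventuallyLE, ae_restrict_iff' measurableSet_uIoc]
      refine Filter.Eventually.of_forall (fun x hx => ?_)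
      rw [Set.uIoc_of_le hc] at hx
      have hx0 : 0 < x := hx.1
      have h1 : (0:ℝ) < x ^ (-(1/2) : ℝ) := Real.rpow_pos_of_pos hx0 _
      have f1 : Real.log x ≤ x - 1 := Real.log_le_sub_one_of_pos hx0
      have f2 : -Real.log x ≤ 2 * x ^ (-(1/2) : ℝ) := by
        have h2 : (-(1/2) : ℝ) * Real.log x + 1 ≤ Real.exp ((-(1/2) : ℝ) * Real.log x) :=
          Real.add_one_le_exp _
        have h3 : x ^ (-(1/2) : ℝ) = Real.exp (Real.log x * (-(1/2) : ℝ)) :=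
          Real.rpow_def_of_pos hx0 _
        rw [mul_comm] at h3
        linarith [h3 ▸ h2]
      rw [Real.norm_eq_abs, abs_of_pos hx0]
      rw [abs_le]
      constructor
      · nlinarith
      · nlinarith
  have key2 : ∀ c : ℝ, IntervalIntegrable (fun x => Real.log |x|) volume 0 c := by
    intro c
    rcases le_total 0 c with hc | hc
    · exact key c hc
    · rw [IntervalIntegrable.iff_comp_neg]
      simp only [abs_neg, neg_zero]
      exact key (-c) (by linarith)
  exact (key2 a).symm.trans (key2 b)

lemma periodic_intervalIntegrable {f : ℝ → ℝ} {T : ℝ} (hf : Function.Periodic f T)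
    (hT : 0 < T) (h : IntervalIntegrable f volume 0 T) (a b : ℝ) :
    IntervalIntegrable f volume a b := by
  have step : ∀ n : ℕ, IntervalIntegrable f volume 0 (n * T) := by
    intro n
    induction n with
    | zero => simp
    | succ n ih =>
      have h1 := h.comp_sub_right ((n : ℝ) * T)
      have heq : (fun x => f (x - (n : ℝ) * T)) = f := funext fun x => hf.sub_nat_mul_eq n
      rw [heq] at h1
      have hcast : ((n + 1 : ℕ) : ℝ) * T = T + (n : ℝ) * T := by push_cast; ring
      rw [hcast]
      exact ih.trans (by simpa using h1)
  obtain ⟨n, hn⟩ := exists_nat_ge (max |a| |b| / T)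
  have hn' : max |a| |b| ≤ (n : ℝ) * T := by
    rw [div_le_iff₀ hT] at hn
    linarith
  have hbig : IntervalIntegrable f volume (-(n * T)) ((n : ℝ) * T) := by
    have h2 := (step (2 * n)).comp_add_right ((n : ℝ) * T)
    have heq : (fun x => f (x + (n : ℝ) * T)) = f := funext fun x => (hf.nat_mul n) x
    rw [heq] at h2
    have e1 : (0 : ℝ) - (n : ℝ) * T = -((n : ℝ) * T) := by ring
    have e2 : ((2 * n : ℕ) : ℝ) * T - (n : ℝ) * T = (n : ℝ) * T := by push_cast; ring
    rwa [e1, e2] at h2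
  refine hbig.mono_set ?_
  have hNN : -((n : ℝ) * T) ≤ (n : ℝ) * T := by
    have : (0:ℝ) ≤ (n : ℝ) * T := le_trans (le_max_left _ _) hn' |>.trans' (abs_nonneg a)
    linarith
  refine Set.uIcc_subset_uIcc ?_ ?_ <;> rw [Set.uIcc_of_le hNN] <;> rw [Set.mem_Icc] <;>
    constructor
  · linarith [neg_abs_le a, le_trans (le_max_left (|a|) (|b|)) hn']
  · linarith [le_abs_self a, le_trans (le_max_left (|a|) (|b|)) hn']
  · linarith [neg_abs_le b, le_trans (le_max_right (|a|) (|b|)) hn']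
  · linarith [le_abs_self b, le_trans (le_max_right (|a|) (|b|)) hn']

lemma ilL_half : IntervalIntegrable (fun x => Real.log |Real.sin x|) volume 0 (π/2) := by
  have hg : IntervalIntegrable (fun x : ℝ => abs (Real.log (abs x)) + Real.log 2) volume 0 (π/2) :=
    (il_log_abs 0 (π/2)).abs.add intervalIntegrable_const
  refine hg.mono_fun' ?_ ?_
  · exact (Real.measurable_log.comp
      (measurable_abs.comp Real.measurable_sin)).aestronglyMeasurable
  · rw [Filter.EventuallyLE, ae_restrict_iff' measurableSet_uIoc]
    refine Filter.Eventually.of_forall (fun x hx => ?_)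
    rw [Set.uIoc_of_le (by positivity : (0:ℝ) ≤ π/2)] at hx
    obtain ⟨hx0, hx1⟩ := hx
    have hs1 : Real.sin x ≤ x := Real.sin_le hx0.le
    have hs2 : x / 2 ≤ Real.sin x := by
      have hj := Real.mul_le_sin hx0.le hx1
      have h4 : x / 2 ≤ 2 / π * x := by
        rw [div_mul_eq_mul_div, div_le_div_iff₀ two_pos Real.pi_pos]
        nlinarith [Real.pi_le_four, hx0.le]
      linarith
    have hsp : 0 < Real.sin x := lt_of_lt_of_le (by linarith) hs2
    rw [Real.norm_eq_abs, abs_of_pos hsp, abs_of_pos hx0]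
    have hlog2 : (0:ℝ) ≤ Real.log 2 := Real.log_nonneg one_le_two
    have hup : Real.log (Real.sin x) ≤ Real.log x := Real.log_le_log hsp hs1
    have hdown : Real.log x - Real.log 2 ≤ Real.log (Real.sin x) := by
      have h1 : Real.log (x / 2) ≤ Real.log (Real.sin x) :=
        Real.log_le_log (by positivity) hs2
      rwa [Real.log_div hx0.ne' two_ne_zero] at h1
    rw [abs_le]
    constructor
    · linarith [neg_abs_le (Real.log x)]
    · linarith [le_abs_self (Real.log x)]

lemma ilL_base : IntervalIntegrable (fun x => Real.log |Real.sin x|) volume 0 π := by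
  refine ilL_half.trans ?_
  have h := ilL_half.comp_sub_left π
  have heq : (fun x => Real.log |Real.sin (π - x)|) = fun x => Real.log |Real.sin x| := by
    funext x; rw [Real.sin_pi_sub]
  rw [heq, sub_zero, show π - π/2 = π/2 by ring] at h
  exact h.symm

lemma L_periodic : Function.Periodic (fun x => Real.log |Real.sin x|) π := by
  intro x
  simp only [Real.sin_add_pi, abs_neg]

lemma ilL (a b : ℝ) :
    IntervalIntegrable (fun x => Real.log |Real.sin x|) volume a b :=
  periodic_intervalIntegrable L_periodic Real.pi_pos ilL_base a b

lemma il_comp_affine {f : ℝ → ℝ} (hf : ∀ a b, IntervalIntegrable f volume a b)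
    (c d a b : ℝ) : IntervalIntegrable (fun x => f (c * x + d)) volume a b := by
  rcases eq_or_ne c 0 with rfl | hc
  · simp only [zero_mul, zero_add]
    exact intervalIntegrable_const
  · have h1 : ∀ u v : ℝ, IntervalIntegrable (fun x => f (x + d)) volume u v := by
      intro u v
      have := (hf (u + d) (v + d)).comp_add_right d
      simpa using this
    have h2 := (h1 (c * a) (c * b)).comp_mul_left (c := c)
    rwa [mul_div_cancel_left₀ _ hc, mul_div_cancel_left₀ _ hc] at h2

lemma meas_zero_pre (c : ℝ) (m : ℝ) (hm : m ≠ 0) :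
    volume {φ : ℝ | Real.sin (m * φ + c) = 0} = 0 := by
  have : {φ : ℝ | Real.sin (m * φ + c) = 0} =
      (fun φ : ℝ => m * φ + c) ⁻¹' {x : ℝ | Real.sin x = 0} := rfl
  rw [this]
  refine Set.Countable.measure_zero ?_ _
  refine countable_sin_zero.preimage ?_
  intro x y h
  simp only at h
  have := mul_left_cancel₀ hm (by linarith : m * x = m * y)
  exact this

lemma key_K : ∫ x in (0:ℝ)..π, Real.log |Real.sin x| = -(π * Real.log 2) := by
  set K := ∫ x in (0:ℝ)..π, Real.log |Real.sin x| with hK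
  -- substitution x = 2 v
  have h1 : (∫ v in (0:ℝ)..(π/2), Real.log |Real.sin (2 * v)|)
      = (2:ℝ)⁻¹ • ∫ x in (2*(0:ℝ))..(2*(π/2)), Real.log |Real.sin x| :=
    intervalIntegral.integral_comp_mul_left (fun x => Real.log |Real.sin x|) two_ne_zero
  rw [show (2:ℝ)*(0:ℝ) = 0 by ring, show (2:ℝ)*(π/2) = π by ring] at h1
  -- a.e. rewrite of the integrand
  have h2 : (∫ v in (0:ℝ)..(π/2), Real.log |Real.sin (2 * v)|)
      = ∫ v in (0:ℝ)..(π/2),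
          (Real.log 2 + Real.log |Real.sin v| + Real.log |Real.sin (v + π/2)|) := by
    apply intervalIntegral.integral_congr_ae
    have hz1 : volume {φ : ℝ | Real.sin (1 * φ + 0) = 0} = 0 := meas_zero_pre 0 1 one_ne_zero
    have hz2 : volume {φ : ℝ | Real.sin (1 * φ + π/2) = 0} = 0 :=
      meas_zero_pre (π/2) 1 one_ne_zero
    have hae :=
      measure_eq_zero_iff_ae_notMem.mp (measure_union_null hz1 hz2)
    filter_upwards [hae] with v hv _
    simp only [Set.mem_union, Set.mem_setOf_eq, not_or, one_mul, add_zero] at hv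
    obtain ⟨hs, hc'⟩ := hv
    have hc : Real.cos v ≠ 0 := by rwa [Real.sin_add_pi_div_two] at hc'
    rw [Real.sin_two_mul, abs_mul, abs_mul, abs_two,
      Real.log_mul (mul_ne_zero two_ne_zero (abs_ne_zero.2 hs)) (abs_ne_zero.2 hc),
      Real.log_mul two_ne_zero (abs_ne_zero.2 hs), ← Real.sin_add_pi_div_two v]
  -- split the right-hand side
  have hiL : IntervalIntegrable (fun v => Real.log |Real.sin v|) volume 0 (π/2) :=
    ilL 0 (π/2)
  have hiC : IntervalIntegrable (fun v => Real.log |Real.sin (v + π/2)|) volume 0 (π/2) := by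
    have := il_comp_affine ilL 1 (π/2) 0 (π/2)
    simpa only [one_mul] using this
  have h3 : (∫ v in (0:ℝ)..(π/2),
        (Real.log 2 + Real.log |Real.sin v| + Real.log |Real.sin (v + π/2)|))
      = (∫ v in (0:ℝ)..(π/2), (Real.log 2 + Real.log |Real.sin v|))
        + ∫ v in (0:ℝ)..(π/2), Real.log |Real.sin (v + π/2)| :=
    intervalIntegral.integral_add (intervalIntegrable_const.add hiL) hiC
  have h4 : (∫ v in (0:ℝ)..(π/2), (Real.log 2 + Real.log |Real.sin v|))
      = (∫ _ in (0:ℝ)..(π/2), Real.log 2) + ∫ v in (0:ℝ)..(π/2), Real.log |Real.sin v| :=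
    intervalIntegral.integral_add intervalIntegrable_const hiL
  have h5 : (∫ v in (0:ℝ)..(π/2), Real.log |Real.sin (v + π/2)|)
      = ∫ x in (0 + π/2 : ℝ)..(π/2 + π/2), Real.log |Real.sin x| :=
    intervalIntegral.integral_comp_add_right (fun x => Real.log |Real.sin x|) (π/2)
  rw [show (0 + π/2 : ℝ) = π/2 by ring, show (π/2 + π/2 : ℝ) = π by ring] at h5
  have h6 : (∫ v in (0:ℝ)..(π/2), Real.log |Real.sin v|)
      + (∫ x in (π/2 : ℝ)..π, Real.log |Real.sin x|) = K :=
    intervalIntegral.integral_add_adjacent_intervals (ilL 0 (π/2)) (ilL (π/2) π)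
  have h7 : (∫ _ in (0:ℝ)..(π/2), Real.log 2) = (π/2) * Real.log 2 := by
    rw [intervalIntegral.integral_const, smul_eq_mul, sub_zero]
  have heq : (2:ℝ)⁻¹ * K = (π/2) * Real.log 2 + K := by
    have := h1.symm.trans (h2.trans (by rw [h3, h4, h5, h7]))
    rw [smul_eq_mul] at this
    linarith [this, h6]
  linarith [heq]

/-- For every real number `a` with `|a| < 1`,
`∫₀^{2π} log |cos φ − a| dφ = −2π log 2`. -/
theorem integral_log_abs_cos_sub (a : ℝ) (ha : |a| < 1) :
    ∫ φ in (0 : ℝ)..(2 * π), Real.log |Real.cos φ - a| = -(2 * π * Real.log 2) := by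
  obtain ⟨ha1, ha2⟩ := abs_lt.mp ha
  set θ := Real.arccos a with hθ
  have haθ : a = Real.cos θ := (Real.cos_arccos ha1.le ha2.le).symm
  set K := ∫ x in (0:ℝ)..π, Real.log |Real.sin x| with hKdef
  have hKval : K = -(π * Real.log 2) := key_K
  have hKshift : ∀ t : ℝ, (∫ x in t..(t + π), Real.log |Real.sin x|) = K := by
    intro t
    have := L_periodic.intervalIntegral_add_eq t 0
    rwa [zero_add] at this
  -- a.e. rewrite of the integrand
  have hcongr : (∫ φ in (0 : ℝ)..(2 * π), Real.log |Real.cos φ - a|)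
      = ∫ φ in (0 : ℝ)..(2 * π),
          (Real.log 2 + Real.log |Real.sin ((φ + θ)/2)| + Real.log |Real.sin ((φ - θ)/2)|) := by
    apply intervalIntegral.integral_congr_ae
    have hz1 : volume {φ : ℝ | Real.sin (2⁻¹ * φ + θ/2) = 0} = 0 :=
      meas_zero_pre (θ/2) 2⁻¹ (by norm_num)
    have hz2 : volume {φ : ℝ | Real.sin (2⁻¹ * φ + (-θ/2)) = 0} = 0 :=
      meas_zero_pre (-θ/2) 2⁻¹ (by norm_num)
    have hae := measure_eq_zero_iff_ae_notMem.mp (measure_union_null hz1 hz2)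
    filter_upwards [hae] with φ hφ _
    simp only [Set.mem_union, Set.mem_setOf_eq, not_or] at hφ
    obtain ⟨hs', ht'⟩ := hφ
    have hs : Real.sin ((φ + θ)/2) ≠ 0 := by
      rwa [show 2⁻¹ * φ + θ/2 = (φ + θ)/2 by ring] at hs'
    have ht : Real.sin ((φ - θ)/2) ≠ 0 := by
      rwa [show 2⁻¹ * φ + (-θ/2) = (φ - θ)/2 by ring] at ht'
    have hid : Real.cos φ - a = -2 * Real.sin ((φ + θ)/2) * Real.sin ((φ - θ)/2) := by
      conv_lhs => rw [haθ]
      exact Real.cos_sub_cos φ θ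
    rw [hid, abs_mul, abs_mul, show |(-2:ℝ)| = 2 by norm_num,
      Real.log_mul (mul_ne_zero two_ne_zero (abs_ne_zero.2 hs)) (abs_ne_zero.2 ht),
      Real.log_mul two_ne_zero (abs_ne_zero.2 hs)]
  -- integrability of the two shifted pieces
  have hi1 : IntervalIntegrable (fun φ => Real.log |Real.sin ((φ + θ)/2)|) volume 0 (2*π) := by
    have := il_comp_affine ilL 2⁻¹ (θ/2) 0 (2*π)
    have heq : (fun φ : ℝ => Real.log |Real.sin (2⁻¹ * φ + θ/2)|)
        = fun φ : ℝ => Real.log |Real.sin ((φ + θ)/2)| := by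
      funext φ; rw [show 2⁻¹ * φ + θ/2 = (φ + θ)/2 by ring]
    rwa [heq] at this
  have hi2 : IntervalIntegrable (fun φ => Real.log |Real.sin ((φ - θ)/2)|) volume 0 (2*π) := by
    have := il_comp_affine ilL 2⁻¹ (-θ/2) 0 (2*π)
    have heq : (fun φ : ℝ => Real.log |Real.sin (2⁻¹ * φ + -θ/2)|)
        = fun φ : ℝ => Real.log |Real.sin ((φ - θ)/2)| := by
      funext φ; rw [show 2⁻¹ * φ + -θ/2 = (φ - θ)/2 by ring]
    rwa [heq] at this
  -- split the integral
  have hsplit : (∫ φ in (0 : ℝ)..(2 * π),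
        (Real.log 2 + Real.log |Real.sin ((φ + θ)/2)| + Real.log |Real.sin ((φ - θ)/2)|))
      = (∫ _ in (0 : ℝ)..(2 * π), Real.log 2)
        + (∫ φ in (0 : ℝ)..(2 * π), Real.log |Real.sin ((φ + θ)/2)|)
        + ∫ φ in (0 : ℝ)..(2 * π), Real.log |Real.sin ((φ - θ)/2)| := by
    rw [intervalIntegral.integral_add (intervalIntegrable_const.add hi1) hi2,
      intervalIntegral.integral_add intervalIntegrable_const hi1]
  -- value of the constant piece
  have hconst : (∫ _ in (0 : ℝ)..(2 * π), Real.log 2) = 2 * π * Real.log 2 := by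
    rw [intervalIntegral.integral_const, smul_eq_mul, sub_zero]
  -- the two shifted integrals both equal 2 K
  have e1 : (∫ φ in (0 : ℝ)..(2 * π), Real.log |Real.sin ((φ + θ)/2)|) = 2 * K := by
    have hA : (∫ φ in (0 : ℝ)..(2 * π), Real.log |Real.sin ((φ + θ)/2)|)
        = ∫ y in (0 + θ : ℝ)..(2 * π + θ), Real.log |Real.sin (y/2)| :=
      intervalIntegral.integral_comp_add_right (fun y => Real.log |Real.sin (y/2)|) θ
    have hB : (∫ y in (0 + θ : ℝ)..(2 * π + θ), Real.log |Real.sin (y/2)|)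
        = (2:ℝ) • ∫ u in ((0 + θ)/2 : ℝ)..((2 * π + θ)/2), Real.log |Real.sin u| :=
      intervalIntegral.integral_comp_div (fun u => Real.log |Real.sin u|) two_ne_zero
    rw [hA, hB, show ((0 + θ)/2 : ℝ) = θ/2 by ring,
      show ((2 * π + θ)/2 : ℝ) = θ/2 + π by ring, hKshift (θ/2), smul_eq_mul]
  have e2 : (∫ φ in (0 : ℝ)..(2 * π), Real.log |Real.sin ((φ - θ)/2)|) = 2 * K := by
    have hA : (∫ φ in (0 : ℝ)..(2 * π), Real.log |Real.sin ((φ - θ)/2)|)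
        = ∫ y in (0 - θ : ℝ)..(2 * π - θ), Real.log |Real.sin (y/2)| :=
      intervalIntegral.integral_comp_sub_right (fun y => Real.log |Real.sin (y/2)|) θ
    have hB : (∫ y in (0 - θ : ℝ)..(2 * π - θ), Real.log |Real.sin (y/2)|)
        = (2:ℝ) • ∫ u in ((0 - θ)/2 : ℝ)..((2 * π - θ)/2), Real.log |Real.sin u| :=
      intervalIntegral.integral_comp_div (fun u => Real.log |Real.sin u|) two_ne_zero
    rw [hA, hB, show ((0 - θ)/2 : ℝ) = -θ/2 by ring,
      show ((2 * π - θ)/2 : ℝ) = -θ/2 + π by ring, hKshift (-θ/2), smul_eq_mul]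
  rw [hcongr, hsplit, hconst, e1, e2, hKval]
  ring
end

section
/- Let h : [0, ∞) → ℝ be continuously differentiable. Then for every t > 0, ∂_t ∫₀^t ( r h(r) / √(t² − r²) ) dr = (1/t) ∫₀^t ( r · (d/dr)( r h(r) ) / √(t² − r²) ) dr. -/
open MeasureTheory Real Set


lemma abel_sqrt_integrable : IntegrableOn (fun s : ℝ => 1 / Real.sqrt (1 - s ^ 2)) (Ioo 0 1) := by
  have hcont : ContinuousOn Real.arcsin (Icc 0 1) := Real.continuous_arcsin.continuousOn
  have hderiv : ∀ x ∈ Ioo (0:ℝ) 1, HasDerivAt Real.arcsin (1 / Real.sqrt (1 - x ^ 2)) x :=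
    fun x hx => Real.hasDerivAt_arcsin (by linarith [hx.1]) (ne_of_lt hx.2)
  exact (intervalIntegral.integrableOn_deriv_of_nonneg hcont hderiv
    (fun x _ => by positivity)).mono_set Ioo_subset_Ioc_self

lemma abel_subst (t : ℝ) (ht : 0 < t) (g : ℝ → ℝ) :
    ∫ r in Ioo (0:ℝ) t, g r / Real.sqrt (t ^ 2 - r ^ 2)
      = ∫ s in Ioo (0:ℝ) 1, g (t * s) / Real.sqrt (1 - s ^ 2) := by
  have himg : (fun s : ℝ => t * s) '' Ioo 0 1 = Ioo 0 t := by
    ext x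
    constructor
    · rintro ⟨s, ⟨hs0, hs1⟩, rfl⟩
      refine ⟨by positivity, ?_⟩
      show t * s < t
      nlinarith
    · rintro ⟨hx0, hxt⟩
      exact ⟨x / t, ⟨by positivity, by rw [div_lt_one ht]; exact hxt⟩, by field_simp⟩
  have hinj : InjOn (fun s : ℝ => t * s) (Ioo 0 1) := fun a _ b _ hab =>
    mul_left_cancel₀ ht.ne' hab
  have hder : ∀ s ∈ Ioo (0:ℝ) 1,
      HasDerivWithinAt (fun s : ℝ => t * s) t (Ioo 0 1) s := fun s _ => by
    simpa using ((hasDerivAt_id s).const_mul t).hasDerivWithinAt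
  rw [← himg, integral_image_eq_integral_abs_deriv_smul measurableSet_Ioo hder hinj]
  refine setIntegral_congr_fun measurableSet_Ioo fun s _ => ?_
  have hsq : Real.sqrt (t ^ 2 - (t * s) ^ 2) = t * Real.sqrt (1 - s ^ 2) := by
    rw [show t ^ 2 - (t * s) ^ 2 = t ^ 2 * (1 - s ^ 2) by ring, Real.sqrt_mul (sq_nonneg t),
      Real.sqrt_sq ht.le]
  rw [smul_eq_mul, abs_of_pos ht, hsq, mul_div_assoc']
  rw [mul_div_mul_left _ _ ht.ne']


/-- Proposition 4 (differentiation of an Abel-type fractional integral): for `h`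
continuously differentiable on `[0,∞)` and `t > 0`,
`∂_t ∫₀^t r h(r)/√(t²−r²) dr = (1/t) ∫₀^t r (d/dr)(r h(r))/√(t²−r²) dr`. -/
theorem deriv_abel_integral (h : ℝ → ℝ) (hh : ContDiffOn ℝ 1 h (Set.Ici 0))
    (t : ℝ) (ht : 0 < t) :
    deriv (fun τ => ∫ r in Set.Ioo (0 : ℝ) τ, r * h r / Real.sqrt (τ ^ 2 - r ^ 2)) t
      = (1 / t) * ∫ r in Set.Ioo (0 : ℝ) t,
          r * derivWithin (fun s => s * h s) (Set.Ici 0) r / Real.sqrt (t ^ 2 - r ^ 2) := by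
  set c : ℝ → ℝ := derivWithin h (Set.Ici 0) with hc_def
  have hc_cont : ContinuousOn c (Ici 0) :=
    hh.continuousOn_derivWithin (uniqueDiffOn_Ici 0) le_rfl
  have hh_cont : ContinuousOn h (Ici 0) := hh.continuousOn
  have hd : ∀ x : ℝ, 0 < x → HasDerivAt h (c x) x := fun x hx =>
    ((hh.differentiableOn one_ne_zero x hx.le).hasDerivWithinAt).hasDerivAt (Ici_mem_nhds hx)
  -- derivWithin of s*h s at positive points
  have hg0 : ∀ r : ℝ, 0 < r →
      derivWithin (fun s => s * h s) (Set.Ici 0) r = h r + r * c r := by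
    intro r hr
    have H : HasDerivAt (fun s => s * h s) (1 * h r + r * c r) r :=
      (hasDerivAt_id r).mul (hd r hr)
    rw [derivWithin_of_mem_nhds (Ici_mem_nhds hr), H.deriv, one_mul]
  -- the rescaled integrand and its τ-derivative
  set q : ℝ → ℝ := fun s => Real.sqrt (1 - s ^ 2) with hq_def
  have hqpos : ∀ s ∈ Ioo (0:ℝ) 1, 0 < q s := fun s hs => by
    have : (0:ℝ) < 1 - s ^ 2 := by nlinarith [hs.1, hs.2]
    exact Real.sqrt_pos.mpr this
  set K : ℝ → ℝ := fun τ => ∫ s in Ioo (0:ℝ) 1, s * h (τ * s) / q s with hK_def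
  -- bounds
  obtain ⟨M, hM⟩ := (isCompact_Icc (a := (0:ℝ)) (b := 2 * t)).exists_bound_of_continuousOn
    (hc_cont.mono (Icc_subset_Ici_self))
  obtain ⟨M₀, hM₀⟩ := (isCompact_Icc (a := (0:ℝ)) (b := t)).exists_bound_of_continuousOn
    (hh_cont.mono (Icc_subset_Ici_self))
  have hM₀nn : 0 ≤ M₀ := le_trans (norm_nonneg _) (hM₀ 0 ⟨le_refl 0, ht.le⟩)
  have hMnn : 0 ≤ M := le_trans (norm_nonneg _) (hM 0 ⟨le_refl 0, by linarith⟩)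
  -- measurability of integrands
  have hmeas : ∀ τ : ℝ, 0 < τ → AEStronglyMeasurable (fun s => s * h (τ * s) / q s)
      (volume.restrict (Ioo (0:ℝ) 1)) := by
    intro τ hτ
    refine ContinuousOn.aestronglyMeasurable ?_ measurableSet_Ioo
    refine ContinuousOn.div ?_ (Real.continuous_sqrt.comp (by continuity)).continuousOn
      fun s hs => (hqpos s hs).ne'
    exact continuousOn_id.mul (hh_cont.comp (continuous_const.mul continuous_id).continuousOn
      fun s hs => by
        have : 0 < τ * s := mul_pos hτ hs.1
        exact this.le)
  have hmeas' : ∀ τ : ℝ, 0 < τ → AEStronglyMeasurable (fun s => s ^ 2 * c (τ * s) / q s)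
      (volume.restrict (Ioo (0:ℝ) 1)) := by
    intro τ hτ
    refine ContinuousOn.aestronglyMeasurable ?_ measurableSet_Ioo
    refine ContinuousOn.div ?_ (Real.continuous_sqrt.comp (by continuity)).continuousOn
      fun s hs => (hqpos s hs).ne'
    exact (continuous_pow 2).continuousOn.mul
      (hc_cont.comp (continuous_const.mul continuous_id).continuousOn
        fun s hs => (mul_pos hτ hs.1).le)
  -- integrability of the base integrand at t
  have hKt_int : Integrable (fun s => s * h (t * s) / q s)
      (volume.restrict (Ioo (0:ℝ) 1)) := by
    refine Integrable.mono ((abel_sqrt_integrable.const_mul M₀).mono_measure le_rfl) (hmeas t ht) ?_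
    filter_upwards [ae_restrict_mem measurableSet_Ioo] with s hs
    have hq := hqpos s hs
    have hts : t * s ∈ Icc (0:ℝ) t :=
      ⟨(mul_pos ht hs.1).le, by nlinarith [hs.1, hs.2]⟩
    have h1 : ‖s * h (t * s) / q s‖ = |s| * |h (t * s)| / q s := by
      rw [norm_div, norm_mul, Real.norm_eq_abs, Real.norm_eq_abs, Real.norm_eq_abs,
        abs_of_pos hq]
    rw [h1, Real.norm_eq_abs]
    have : |s| * |h (t * s)| ≤ M₀ := by
      have := hM₀ _ hts
      rw [Real.norm_eq_abs] at this
      nlinarith [abs_nonneg (h (t * s)), hs.1, hs.2, abs_of_pos hs.1]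
    calc |s| * |h (t * s)| / q s ≤ M₀ / q s := by gcongr
      _ ≤ |M₀ * (1 / q s)| := by rw [mul_one_div]; exact le_abs_self _
  -- derivative under the integral sign
  have key : Integrable (fun s => s ^ 2 * c (t * s) / q s) (volume.restrict (Ioo (0:ℝ) 1)) ∧
      HasDerivAt K (∫ s in Ioo (0:ℝ) 1, s ^ 2 * c (t * s) / q s) t := by
    refine hasDerivAt_integral_of_dominated_loc_of_deriv_le (s := Metric.ball t (t / 2)) (x₀ := t)
      (μ := volume.restrict (Ioo (0:ℝ) 1))
      (F := fun τ s => s * h (τ * s) / q s)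
      (F' := fun τ s => s ^ 2 * c (τ * s) / q s)
      (bound := fun s => M * (1 / q s)) (Metric.ball_mem_nhds t (by positivity))
      ?_ hKt_int (hmeas' t ht) ?_ ((abel_sqrt_integrable.const_mul M).mono_measure le_rfl) ?_
    · filter_upwards [eventually_gt_nhds ht] with τ hτ using hmeas τ hτ
    · filter_upwards [ae_restrict_mem measurableSet_Ioo] with s hs τ hτ
      rw [Metric.mem_ball, Real.dist_eq] at hτ
      have hτ1 : t / 2 < τ := by cases abs_lt.mp hτ; linarith
      have hτ2 : τ < 2 * t := by cases abs_lt.mp hτ; linarith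
      have hq := hqpos s hs
      have hτ0 : 0 < τ := by linarith
      have hts : τ * s ∈ Icc (0:ℝ) (2 * t) :=
        ⟨(mul_pos hτ0 hs.1).le, by nlinarith [hs.1, hs.2]⟩
      have h1 : ‖s ^ 2 * c (τ * s) / q s‖ = s ^ 2 * |c (τ * s)| / q s := by
        rw [norm_div, norm_mul, Real.norm_eq_abs, Real.norm_eq_abs, Real.norm_eq_abs,
          abs_of_pos hq, abs_of_pos (pow_pos hs.1 2)]
      rw [h1, mul_one_div]
      have h2 : s ^ 2 * |c (τ * s)| ≤ M := by
        have := hM _ hts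
        rw [Real.norm_eq_abs] at this
        have hs2 : s ^ 2 ≤ 1 := by nlinarith [hs.1, hs.2]
        nlinarith [mul_nonneg (sub_nonneg.mpr hs2) (abs_nonneg (c (τ * s)))]
      gcongr
    · filter_upwards [ae_restrict_mem measurableSet_Ioo] with s hs τ hτ
      rw [Metric.mem_ball, Real.dist_eq] at hτ
      have hτ1 : 0 < τ := by cases abs_lt.mp hτ; linarith
      have hq := hqpos s hs
      have Hh : HasDerivAt (fun τ : ℝ => h (τ * s)) (c (τ * s) * s) τ :=
        (hd _ (mul_pos hτ1 hs.1)).comp τ (hasDerivAt_mul_const s)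
      have H : HasDerivAt (fun τ : ℝ => s / q s * h (τ * s)) (s / q s * (c (τ * s) * s)) τ :=
        Hh.const_mul _
      have e1 : (fun τ : ℝ => s * h (τ * s) / q s) = fun τ : ℝ => s / q s * h (τ * s) := by
        funext τ; ring
      have e2 : s ^ 2 * c (τ * s) / q s = s / q s * (c (τ * s) * s) := by ring
      rw [e1, e2]
      exact H
  obtain ⟨hL_int, hK⟩ := key
  set L : ℝ := ∫ s in Ioo (0:ℝ) 1, s ^ 2 * c (t * s) / q s with hL_def
  -- LHS
  have hFeq : (fun τ => ∫ r in Ioo (0:ℝ) τ, r * h r / Real.sqrt (τ ^ 2 - r ^ 2))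
      =ᶠ[nhds t] fun τ => τ * K τ := by
    filter_upwards [eventually_gt_nhds ht] with τ hτ
    rw [abel_subst τ hτ (fun r => r * h r)]
    simp only [hK_def, hq_def]
    rw [← integral_const_mul]
    exact setIntegral_congr_fun measurableSet_Ioo fun s _ => by ring
  have Hmul : HasDerivAt (fun τ : ℝ => τ * K τ) (1 * K t + t * L) t := by
    exact (hasDerivAt_id' t).mul hK
  have hLHS : deriv (fun τ => ∫ r in Ioo (0:ℝ) τ, r * h r / Real.sqrt (τ ^ 2 - r ^ 2)) t
      = K t + t * L := by
    rw [hFeq.deriv_eq, Hmul.deriv, one_mul]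
  -- RHS
  have hRHS : (∫ r in Ioo (0:ℝ) t,
        r * derivWithin (fun s => s * h s) (Set.Ici 0) r / Real.sqrt (t ^ 2 - r ^ 2))
      = t * (K t + t * L) := by
    rw [abel_subst t ht (fun r => r * derivWithin (fun s => s * h s) (Set.Ici 0) r)]
    have step1 : ∫ s in Ioo (0:ℝ) 1,
        (fun r => r * derivWithin (fun s => s * h s) (Set.Ici 0) r) (t * s)
          / Real.sqrt (1 - s ^ 2)
        = ∫ s in Ioo (0:ℝ) 1,
            (t * (s * h (t * s) / q s) + t * (t * (s ^ 2 * c (t * s) / q s))) := by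
      refine setIntegral_congr_fun measurableSet_Ioo fun s hs => ?_
      simp only [hq_def]
      rw [hg0 _ (mul_pos ht hs.1)]
      ring
    rw [step1, integral_add (hKt_int.const_mul t) ((hL_int.const_mul t).const_mul t),
      integral_const_mul, integral_const_mul,
      integral_const_mul]
    simp only [hK_def, hL_def]
    ring
  rw [hLHS, hRHS]
  field_simp
end

section
/- Let m be a natural number, let D_r denote the operator (D_r u)(r) = u′(r)/(2r), and let q : (0, ∞) → ℝ be smooth. Then for every r > 0, ( D_r^m ( r ↦ r^{2m+1} q′(r) ) )(r) = r · d/dr [ ( D_r^m ( r ↦ r^{2m} q(r) ) )(r) ]. -/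
/-- The operator `(D_r u)(r) = u′(r)/(2r)`. -/
noncomputable def Dr (u : ℝ → ℝ) : ℝ → ℝ := fun r => deriv u r / (2 * r)

lemma Dr_iterate_eqOn {f g : ℝ → ℝ} (m : ℕ) (h : Set.EqOn f g (Set.Ioi 0)) :
    Set.EqOn (Dr^[m] f) (Dr^[m] g) (Set.Ioi 0) := by
  induction m generalizing f g with
  | zero => simpa using h
  | succ m ih =>
    rw [Function.iterate_succ_apply, Function.iterate_succ_apply]
    apply ih
    intro s hs
    unfold Dr
    congr 1
    exact Filter.EventuallyEq.deriv_eq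
      (Filter.eventuallyEq_of_mem (isOpen_Ioi.mem_nhds hs) h)

lemma Dr_pow_comm_aux : ∀ m : ℕ, ∀ q : ℝ → ℝ,
    ContDiffOn ℝ (⊤ : ℕ∞) q (Set.Ioi 0) → ∀ r : ℝ, 0 < r →
    (Dr^[m] (fun s => s ^ (2 * m + 1) * deriv q s)) r
      = r * deriv (Dr^[m] (fun s => s ^ (2 * m) * q s)) r := by
  intro m
  induction m with
  | zero =>
    intro q hq r hr
    simp only [Function.iterate_zero, id_eq, Nat.mul_zero, Nat.zero_add, pow_one, pow_zero,
      one_mul]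
  | succ m ih =>
    intro q hq r hr
    -- differentiability facts
    have hq' : ContDiffOn ℝ (⊤ : ℕ∞) (deriv q) (Set.Ioi 0) :=
      hq.deriv_of_isOpen isOpen_Ioi (by simp)
    have hq'' : ContDiffOn ℝ (⊤ : ℕ∞) (deriv (deriv q)) (Set.Ioi 0) :=
      hq'.deriv_of_isOpen isOpen_Ioi (by simp)
    have hd : ∀ s ∈ Set.Ioi (0:ℝ), DifferentiableAt ℝ q s := fun s hs =>
      (hq.differentiableOn (by simp)).differentiableAt (isOpen_Ioi.mem_nhds hs)
    have hd' : ∀ s ∈ Set.Ioi (0:ℝ), DifferentiableAt ℝ (deriv q) s := fun s hs =>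
      (hq'.differentiableOn (by simp)).differentiableAt (isOpen_Ioi.mem_nhds hs)
    -- auxiliary function
    set q1 : ℝ → ℝ := fun s => (m + 1 : ℝ) * q s + s * deriv q s / 2 with hq1def
    have hq1 : ContDiffOn ℝ (⊤ : ℕ∞) q1 (Set.Ioi 0) := by
      apply ContDiffOn.add
      · exact contDiffOn_const.mul hq
      · exact (contDiffOn_id.mul hq').div_const 2
    have hq1deriv : ∀ s ∈ Set.Ioi (0:ℝ),
        deriv q1 s = (m + 1 : ℝ) * deriv q s + (deriv q s + s * deriv (deriv q) s) / 2 := by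
      intro s hs
      rw [hq1def]
      rw [deriv_fun_add ((hd s hs).const_mul _)
        (((differentiableAt_fun_id.fun_mul (hd' s hs))).div_const 2)]
      rw [deriv_const_mul _ (hd s hs), deriv_div_const,
        deriv_fun_mul differentiableAt_fun_id (hd' s hs)]
      simp
    -- Step A
    have stepA : Set.EqOn (Dr (fun s => s ^ (2 * (m+1)) * q s))
        (fun s => s ^ (2 * m) * q1 s) (Set.Ioi 0) := by
      intro s hs
      have hs0 : (0:ℝ) < s := hs
      unfold Dr
      rw [deriv_fun_mul (differentiableAt_pow _) (hd s hs), deriv_pow_field]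
      rw [hq1def]
      have h2 : 2 * (m + 1) = 2 * m + 2 := by ring
      rw [h2]
      rw [show 2 * m + 2 - 1 = 2 * m + 1 by omega]
      push_cast
      field_simp
      ring
    -- Step B
    have stepB : Set.EqOn (Dr (fun s => s ^ (2 * (m+1) + 1) * deriv q s))
        (fun s => s ^ (2 * m + 1) * deriv q1 s) (Set.Ioi 0) := by
      intro s hs
      have hs0 : (0:ℝ) < s := hs
      unfold Dr
      rw [deriv_fun_mul (differentiableAt_pow _) (hd' s hs), deriv_pow_field]
      show _ = s ^ (2 * m + 1) * deriv q1 s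
      rw [hq1deriv s hs]
      have h2 : 2 * (m + 1) + 1 = 2 * m + 3 := by ring
      rw [h2]
      rw [show 2 * m + 3 - 1 = 2 * m + 2 by omega]
      push_cast
      field_simp
      ring
    -- conclude
    rw [Function.iterate_succ_apply, Function.iterate_succ_apply]
    rw [Dr_iterate_eqOn m stepB hr]
    rw [ih q1 hq1 r hr]
    congr 1
    apply Filter.EventuallyEq.deriv_eq
    apply Filter.eventuallyEq_of_mem (isOpen_Ioi.mem_nhds hr)
    intro s hs
    exact (Dr_iterate_eqOn m stepA hs).symm

/-- The identity `D_r^m (r^{2m+1} q′) = r ∂_r (D_r^m (r^{2m} q))` for `q` smooth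
on `(0,∞)` and `r > 0`. -/
theorem Dr_pow_comm (m : ℕ) (q : ℝ → ℝ)
    (hq : ContDiffOn ℝ (⊤ : ℕ∞) q (Set.Ioi 0)) (r : ℝ) (hr : 0 < r) :
    (Dr^[m] (fun s => s ^ (2 * m + 1) * deriv q s)) r
      = r * deriv (Dr^[m] (fun s => s ^ (2 * m) * q s)) r := by
  exact Dr_pow_comm_aux m q hq r hr
end

section
/- Let R₀ > 0 and define K(t, r̄) = ∫_t^{2R₀} ( r / √(r² − t²) ) log | r² − r̄² | dr for 0 ≤ t ≤ 2R₀ and 0 ≤ r̄ ≤ 2R₀. Then for 0 < t < 2R₀ and 0 < r̄ < 2R₀ with t ≠ r̄, K(t, r̄) = √(4R₀² − t²) · ( −2 + log |4R₀² − r̄²| ) + Γ(t, r̄), where Γ(t, r̄) = √(r̄² − t²) · log( ( √(4R₀² − t²) + √(r̄² − t²) ) / ( √(4R₀² − t²) − √(r̄² − t²) ) ) if t < r̄, and Γ(t, r̄) = 2 √(t² − r̄²) · arctan( √( (4R₀² − t²) / (t² − r̄²) ) ) if t > r̄. -/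
open Real
open MeasureTheory

private lemma hasDerivAt_w {t : ℝ} {r : ℝ} (h : t^2 < r^2) :
    HasDerivAt (fun x : ℝ => Real.sqrt (x^2 - t^2)) (r / Real.sqrt (r^2 - t^2)) r := by
  have h0 : r^2 - t^2 ≠ 0 := by nlinarith
  have hs : Real.sqrt (r^2 - t^2) ≠ 0 := Real.sqrt_ne_zero'.2 (by nlinarith)
  have h1 : HasDerivAt (fun x : ℝ => x^2 - t^2) (2 * r) r := by
    simpa using (hasDerivAt_pow 2 r).sub_const (t^2)
  have := (Real.hasDerivAt_sqrt h0).comp r h1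
  refine this.congr_deriv ?_
  field_simp

private lemma contW (t : ℝ) : Continuous (fun x : ℝ => Real.sqrt (x^2 - t^2)) :=
  Real.continuous_sqrt.comp ((continuous_pow 2).sub continuous_const)

private lemma intInt_w {t b : ℝ} (ht : 0 < t) (htb : t ≤ b) :
    IntervalIntegrable (fun r : ℝ => r / Real.sqrt (r^2 - t^2)) volume t b := by
  apply intervalIntegral.intervalIntegrable_deriv_of_nonneg (g := fun x => Real.sqrt (x^2 - t^2))
  · exact (contW t).continuousOn
  · intro x hx
    rw [min_eq_left htb, max_eq_right htb] at hx
    exact hasDerivAt_w (by nlinarith [hx.1, hx.2])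
  · intro x hx
    rw [min_eq_left htb, max_eq_right htb] at hx
    exact div_nonneg (by linarith [hx.1]) (Real.sqrt_nonneg _)

private lemma logInt_left {m c : ℝ} (h : m < c) :
    IntervalIntegrable (fun r : ℝ => Real.log (c - r)) volume m c := by
  set K := |Real.log (c - m)| with hK
  have hint : IntervalIntegrable (fun r : ℝ => K - Real.log (c - r)) volume m c := by
    apply intervalIntegral.intervalIntegrable_deriv_of_nonneg
      (g := fun x => (c - x) * Real.log (c - x) + (K + 1) * x)
    · exact ((Real.continuous_mul_log.comp (continuous_const.sub continuous_id)).add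
        (continuous_const.mul continuous_id)).continuousOn
    · intro x hx
      rw [min_eq_left h.le, max_eq_right h.le] at hx
      have h1 : c - x ≠ 0 := sub_ne_zero.2 (ne_of_gt (by linarith [hx.2]))
      have h2 := (Real.hasDerivAt_mul_log h1).comp x ((hasDerivAt_id x).const_sub c)
      have h3 := h2.add ((hasDerivAt_id x).const_mul (K + 1))
      refine h3.congr_deriv ?_
      ring
    · intro x hx
      rw [min_eq_left h.le, max_eq_right h.le] at hx
      have h1 : Real.log (c - x) ≤ Real.log (c - m) :=
        Real.log_le_log (by linarith [hx.2]) (by linarith [hx.1])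
      have h2 := le_abs_self (Real.log (c - m))
      linarith
  have heq : (fun r : ℝ => Real.log (c - r)) = fun r => K - (K - Real.log (c - r)) := by
    funext r; ring
  rw [heq]
  exact intervalIntegrable_const.sub hint

private lemma logInt_right {c M : ℝ} (h : c < M) :
    IntervalIntegrable (fun r : ℝ => Real.log (r - c)) volume c M := by
  set K := |Real.log (M - c)| with hK
  have hint : IntervalIntegrable (fun r : ℝ => K - Real.log (r - c)) volume c M := by
    apply intervalIntegral.intervalIntegrable_deriv_of_nonneg
      (g := fun x => (K + 1) * x - (x - c) * Real.log (x - c))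
    · exact ((continuous_const.mul continuous_id).sub
        (Real.continuous_mul_log.comp (continuous_id.sub continuous_const))).continuousOn
    · intro x hx
      rw [min_eq_left h.le, max_eq_right h.le] at hx
      have h1 : x - c ≠ 0 := sub_ne_zero.2 (ne_of_gt (by linarith [hx.1]))
      have h2 := (Real.hasDerivAt_mul_log h1).comp x ((hasDerivAt_id x).sub_const c)
      have h3 := ((hasDerivAt_id x).const_mul (K + 1)).sub h2
      refine h3.congr_deriv ?_
      ring
    · intro x hx
      rw [min_eq_left h.le, max_eq_right h.le] at hx
      have h1 : Real.log (x - c) ≤ Real.log (M - c) :=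
        Real.log_le_log (by linarith [hx.1]) (by linarith [hx.2])
      have h2 := le_abs_self (Real.log (M - c))
      linarith
  have heq : (fun r : ℝ => Real.log (r - c)) = fun r => K - (K - Real.log (r - c)) := by
    funext r; ring
  rw [heq]
  exact intervalIntegrable_const.sub hint

set_option maxHeartbeats 1000000 in
/-- Explicit evaluation of the kernel `K(t, r̄) = ∫_t^{2R₀} (r/√(r²−t²)) log |r²−r̄²| dr`
arising in the finite-time inversion of the two-dimensional wave equation:
for `0 < t < 2R₀`, `0 < r̄ < 2R₀`, `t ≠ r̄`,
`K(t,r̄) = √(4R₀²−t²)(−2 + log |4R₀²−r̄²|) + Γ(t,r̄)` with `Γ` as in the paper. -/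
theorem kernel_K_eval (R₀ t rb : ℝ) (hR₀ : 0 < R₀)
    (ht : 0 < t) (ht2 : t < 2 * R₀) (hrb : 0 < rb) (hrb2 : rb < 2 * R₀)
    (hne : t ≠ rb) :
    (∫ r in Set.Ioc t (2 * R₀), (r / Real.sqrt (r ^ 2 - t ^ 2)) * Real.log |r ^ 2 - rb ^ 2|)
      = Real.sqrt (4 * R₀ ^ 2 - t ^ 2) * (-2 + Real.log |4 * R₀ ^ 2 - rb ^ 2|) +
        (if t < rb then
          Real.sqrt (rb ^ 2 - t ^ 2) *
            Real.log ((Real.sqrt (4 * R₀ ^ 2 - t ^ 2) + Real.sqrt (rb ^ 2 - t ^ 2)) /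
              (Real.sqrt (4 * R₀ ^ 2 - t ^ 2) - Real.sqrt (rb ^ 2 - t ^ 2)))
        else
          2 * Real.sqrt (t ^ 2 - rb ^ 2) *
            Real.arctan (Real.sqrt ((4 * R₀ ^ 2 - t ^ 2) / (t ^ 2 - rb ^ 2)))) := by
  simp only [Real.log_abs]
  rw [← intervalIntegral.integral_of_le (le_of_lt ht2)]
  set f : ℝ → ℝ := fun r => (r / Real.sqrt (r ^ 2 - t ^ 2)) * Real.log (r ^ 2 - rb ^ 2) with hf
  have hfm : Measurable f :=
    (measurable_id.div (Real.continuous_sqrt.measurable.comp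
        ((measurable_id.pow_const 2).sub_const _))).mul
      (Real.measurable_log.comp ((measurable_id.pow_const 2).sub_const _))
  have hA2 : (Real.sqrt (4 * R₀ ^ 2 - t ^ 2)) ^ 2 = 4 * R₀ ^ 2 - t ^ 2 :=
    Real.sq_sqrt (by nlinarith)
  have hApos : 0 < Real.sqrt (4 * R₀ ^ 2 - t ^ 2) := Real.sqrt_pos.2 (by nlinarith)
  set A := Real.sqrt (4 * R₀ ^ 2 - t ^ 2) with hA
  rcases lt_or_gt_of_ne hne with hlt | hgt
  · -- case t < rb
    rw [if_pos hlt]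
    have hs2 : (Real.sqrt (rb ^ 2 - t ^ 2)) ^ 2 = rb ^ 2 - t ^ 2 :=
      Real.sq_sqrt (by nlinarith)
    have hspos : 0 < Real.sqrt (rb ^ 2 - t ^ 2) := Real.sqrt_pos.2 (by nlinarith)
    set s := Real.sqrt (rb ^ 2 - t ^ 2) with hsdef
    have hsA : s < A := by
      rw [hsdef, hA]
      exact Real.sqrt_lt_sqrt (by nlinarith) (by nlinarith)
    set G : ℝ → ℝ := fun r =>
      (Real.sqrt (r ^ 2 - t ^ 2) - s) * Real.log (Real.sqrt (r ^ 2 - t ^ 2) - s) +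
      (Real.sqrt (r ^ 2 - t ^ 2) + s) * Real.log (Real.sqrt (r ^ 2 - t ^ 2) + s) -
      2 * Real.sqrt (r ^ 2 - t ^ 2) with hG
    have hGcont : Continuous G := by
      refine ((Real.continuous_mul_log.comp ((contW t).sub continuous_const)).add
        (Real.continuous_mul_log.comp ((contW t).add continuous_const))).sub
        (continuous_const.mul (contW t))
    have hGderiv : ∀ x, t < x → x < 2 * R₀ → x ≠ rb → HasDerivAt G (f x) x := by
      intro x hx1 hx2 hxrb
      have hx2' : t ^ 2 < x ^ 2 := by nlinarith
      have hw2 : (Real.sqrt (x ^ 2 - t ^ 2)) ^ 2 = x ^ 2 - t ^ 2 :=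
        Real.sq_sqrt (by nlinarith)
      have hwpos : 0 < Real.sqrt (x ^ 2 - t ^ 2) := Real.sqrt_pos.2 (by nlinarith)
      set w := Real.sqrt (x ^ 2 - t ^ 2) with hwdef
      have hws : w - s ≠ 0 := by
        intro hcon
        apply hxrb
        have hws' : w = s := by linarith [sub_eq_zero.1 hcon]
        have hxx : x ^ 2 = rb ^ 2 := by nlinarith
        calc x = Real.sqrt (x ^ 2) := (Real.sqrt_sq (by linarith : (0:ℝ) ≤ x)).symm
          _ = Real.sqrt (rb ^ 2) := by rw [hxx]
          _ = rb := Real.sqrt_sq hrb.le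
      have hwps : w + s ≠ 0 := by positivity
      have hwD : HasDerivAt (fun y : ℝ => Real.sqrt (y ^ 2 - t ^ 2)) (x / w) x :=
        hasDerivAt_w hx2'
      have h1 := (Real.hasDerivAt_mul_log hws).comp x (hwD.sub_const s)
      have h2 := (Real.hasDerivAt_mul_log hwps).comp x (hwD.add_const s)
      have h3 := (h1.add h2).sub (hwD.const_mul 2)
      have h4 : HasDerivAt G
          ((Real.log (w - s) + 1) * (x / w) + (Real.log (w + s) + 1) * (x / w) -
            2 * (x / w)) x := h3
      have hlogm : Real.log (w - s) + Real.log (w + s) = Real.log (x ^ 2 - rb ^ 2) := by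
        rw [← Real.log_mul hws hwps]
        congr 1
        nlinarith
      convert h4 using 1
      rw [hf]
      simp only
      rw [← hwdef, ← hlogm]
      ring
    -- integrability
    set m := (t + rb) / 2 with hm
    have htm : t < m := by rw [hm]; linarith
    have hmrb : m < rb := by rw [hm]; linarith
    have hint_a : IntervalIntegrable f volume t m := by
      obtain ⟨C, hC⟩ := (isCompact_Icc (a := t) (b := m)).exists_bound_of_continuousOn
        (f := fun r : ℝ => Real.log (r ^ 2 - rb ^ 2))
        (ContinuousOn.log (by fun_prop) (fun x hx => ne_of_lt (by nlinarith [hx.1, hx.2])))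
      refine ((intInt_w ht htm.le).const_mul C).mono_fun'
        (hfm.aestronglyMeasurable.restrict) ?_
      filter_upwards [MeasureTheory.ae_restrict_mem measurableSet_uIoc] with r hr
      rw [Set.uIoc_of_le htm.le] at hr
      have hr1 : t < r := hr.1
      have hr2 : r ≤ m := hr.2
      have hwpos : 0 < Real.sqrt (r ^ 2 - t ^ 2) := Real.sqrt_pos.2 (by nlinarith)
      have hrw : 0 ≤ r / Real.sqrt (r ^ 2 - t ^ 2) :=
        div_nonneg (by linarith) (Real.sqrt_nonneg _)
      have hCr := hC r ⟨hr1.le, hr2⟩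
      rw [Real.norm_eq_abs] at hCr
      calc ‖f r‖ = (r / Real.sqrt (r ^ 2 - t ^ 2)) * |Real.log (r ^ 2 - rb ^ 2)| := by
            rw [hf]; simp only [norm_mul, Real.norm_eq_abs]
            rw [abs_of_nonneg hrw]
        _ ≤ (r / Real.sqrt (r ^ 2 - t ^ 2)) * C := mul_le_mul_of_nonneg_left hCr hrw
        _ = C * (r / Real.sqrt (r ^ 2 - t ^ 2)) := by ring
    have hint_b : IntervalIntegrable f volume m rb := by
      obtain ⟨B, hB⟩ := (isCompact_Icc (a := m) (b := rb)).exists_bound_of_continuousOn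
        (f := fun r : ℝ => r / Real.sqrt (r ^ 2 - t ^ 2))
        (ContinuousOn.div continuousOn_id (contW t).continuousOn
          (fun x hx => Real.sqrt_ne_zero'.2 (by nlinarith [hx.1, hx.2])))
      obtain ⟨D, hD⟩ := (isCompact_Icc (a := m) (b := rb)).exists_bound_of_continuousOn
        (f := fun r : ℝ => Real.log (r + rb))
        (ContinuousOn.log (by fun_prop) (fun x hx => by nlinarith [hx.1, hx.2]))
      set K := |Real.log (rb - m)| with hK
      have hK0 : 0 ≤ K := abs_nonneg _
      have hD0 : 0 ≤ D := le_trans (norm_nonneg _) (hD rb ⟨hmrb.le, le_refl _⟩)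
      have hB0 : 0 ≤ B := le_trans (norm_nonneg _) (hB rb ⟨hmrb.le, le_refl _⟩)
      have hg : IntervalIntegrable
          (fun r : ℝ => B * ((2 * K - Real.log (rb - r)) + D)) volume m rb :=
        (((intervalIntegrable_const (c := 2 * K)).sub (logInt_left hmrb)).add
          (intervalIntegrable_const (c := D))).const_mul B
      refine hg.mono_fun' (hfm.aestronglyMeasurable.restrict) ?_
      filter_upwards [MeasureTheory.ae_restrict_mem measurableSet_uIoc] with r hr
      rw [Set.uIoc_of_le hmrb.le] at hr
      have hr1 : m < r := hr.1
      have hr2 : r ≤ rb := hr.2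
      have hrpos : 0 < r := lt_trans (by linarith) hr1
      have hwpos : 0 < Real.sqrt (r ^ 2 - t ^ 2) := Real.sqrt_pos.2 (by nlinarith)
      have hBr : r / Real.sqrt (r ^ 2 - t ^ 2) ≤ B := by
        have hBr' := hB r ⟨hr1.le, hr2⟩
        rwa [Real.norm_eq_abs, abs_of_nonneg (div_nonneg hrpos.le (Real.sqrt_nonneg _))] at hBr'
      have hrw : 0 ≤ r / Real.sqrt (r ^ 2 - t ^ 2) :=
        div_nonneg (by linarith) (Real.sqrt_nonneg _)
      have hlogbd : |Real.log (r ^ 2 - rb ^ 2)| ≤ (2 * K - Real.log (rb - r)) + D := by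
        rcases eq_or_lt_of_le hr2 with hcase | hcase
        · rw [hcase]
          rw [show rb ^ 2 - rb ^ 2 = 0 by ring, show rb - rb = 0 by ring,
            Real.log_zero, abs_zero]
          linarith
        · have hne1 : rb - r ≠ 0 := ne_of_gt (by linarith)
          have hne2 : r + rb ≠ 0 := ne_of_gt (by linarith)
          have hfact : Real.log (r ^ 2 - rb ^ 2) =
              Real.log (rb - r) + Real.log (r + rb) := by
            have hneg : r ^ 2 - rb ^ 2 = -((rb - r) * (r + rb)) := by ring
            rw [hneg, Real.log_neg_eq_log, Real.log_mul hne1 hne2]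
          rw [hfact]
          have hlr : Real.log (rb - r) ≤ K :=
            le_trans (Real.log_le_log (by linarith) (by linarith)) (le_abs_self _)
          have h5 : |Real.log (rb - r)| ≤ 2 * K - Real.log (rb - r) :=
            abs_le.2 ⟨by linarith, by linarith⟩
          have h6 : |Real.log (r + rb)| ≤ D := by
            have h6' := hD r ⟨hr1.le, hr2⟩
            rwa [Real.norm_eq_abs] at h6'
          calc |Real.log (rb - r) + Real.log (r + rb)|
              ≤ |Real.log (rb - r)| + |Real.log (r + rb)| := abs_add_le _ _
            _ ≤ (2 * K - Real.log (rb - r)) + D := add_le_add h5 h6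
      calc ‖f r‖ = (r / Real.sqrt (r ^ 2 - t ^ 2)) * |Real.log (r ^ 2 - rb ^ 2)| := by
            rw [hf]; simp only [norm_mul, Real.norm_eq_abs]
            rw [abs_of_nonneg hrw]
        _ ≤ B * ((2 * K - Real.log (rb - r)) + D) :=
            mul_le_mul hBr hlogbd (abs_nonneg _) hB0
    have hint1 : IntervalIntegrable f volume t rb := hint_a.trans hint_b
    have hint2 : IntervalIntegrable f volume rb (2 * R₀) := by
      obtain ⟨B, hB⟩ := (isCompact_Icc (a := rb) (b := 2 * R₀)).exists_bound_of_continuousOn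
        (f := fun r : ℝ => r / Real.sqrt (r ^ 2 - t ^ 2))
        (ContinuousOn.div continuousOn_id (contW t).continuousOn
          (fun x hx => Real.sqrt_ne_zero'.2 (by nlinarith [hx.1, hx.2])))
      obtain ⟨D, hD⟩ := (isCompact_Icc (a := rb) (b := 2 * R₀)).exists_bound_of_continuousOn
        (f := fun r : ℝ => Real.log (r + rb))
        (ContinuousOn.log (by fun_prop) (fun x hx => by nlinarith [hx.1, hx.2]))
      set K := |Real.log (2 * R₀ - rb)| with hK
      have hK0 : 0 ≤ K := abs_nonneg _
      have hD0 : 0 ≤ D := le_trans (norm_nonneg _) (hD rb ⟨le_refl _, hrb2.le⟩)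
      have hB0 : 0 ≤ B := le_trans (norm_nonneg _) (hB rb ⟨le_refl _, hrb2.le⟩)
      have hg : IntervalIntegrable
          (fun r : ℝ => B * ((2 * K - Real.log (r - rb)) + D)) volume rb (2 * R₀) :=
        (((intervalIntegrable_const (c := 2 * K)).sub (logInt_right hrb2)).add
          (intervalIntegrable_const (c := D))).const_mul B
      refine hg.mono_fun' (hfm.aestronglyMeasurable.restrict) ?_
      filter_upwards [MeasureTheory.ae_restrict_mem measurableSet_uIoc] with r hr
      rw [Set.uIoc_of_le hrb2.le] at hr
      have hr1 : rb < r := hr.1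
      have hr2 : r ≤ 2 * R₀ := hr.2
      have hrpos : 0 < r := lt_trans hrb hr1
      have hwpos : 0 < Real.sqrt (r ^ 2 - t ^ 2) := Real.sqrt_pos.2 (by nlinarith)
      have hBr : r / Real.sqrt (r ^ 2 - t ^ 2) ≤ B := by
        have hBr' := hB r ⟨hr1.le, hr2⟩
        rwa [Real.norm_eq_abs, abs_of_nonneg (div_nonneg hrpos.le (Real.sqrt_nonneg _))] at hBr'
      have hrw : 0 ≤ r / Real.sqrt (r ^ 2 - t ^ 2) :=
        div_nonneg (by linarith) (Real.sqrt_nonneg _)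
      have hne1 : r - rb ≠ 0 := ne_of_gt (by linarith)
      have hne2 : r + rb ≠ 0 := ne_of_gt (by linarith)
      have hfact : Real.log (r ^ 2 - rb ^ 2) =
          Real.log (r - rb) + Real.log (r + rb) := by
        have hposf : r ^ 2 - rb ^ 2 = (r - rb) * (r + rb) := by ring
        rw [hposf, Real.log_mul hne1 hne2]
      have hlr : Real.log (r - rb) ≤ K :=
        le_trans (Real.log_le_log (by linarith) (by linarith)) (le_abs_self _)
      have h5 : |Real.log (r - rb)| ≤ 2 * K - Real.log (r - rb) :=
        abs_le.2 ⟨by linarith, by linarith⟩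
      have h6 : |Real.log (r + rb)| ≤ D := by
        have h6' := hD r ⟨hr1.le, hr2⟩
        rwa [Real.norm_eq_abs] at h6'
      have hlogbd : |Real.log (r ^ 2 - rb ^ 2)| ≤ (2 * K - Real.log (r - rb)) + D := by
        rw [hfact]
        calc |Real.log (r - rb) + Real.log (r + rb)|
            ≤ |Real.log (r - rb)| + |Real.log (r + rb)| := abs_add_le _ _
          _ ≤ (2 * K - Real.log (r - rb)) + D := add_le_add h5 h6
      calc ‖f r‖ = (r / Real.sqrt (r ^ 2 - t ^ 2)) * |Real.log (r ^ 2 - rb ^ 2)| := by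
            rw [hf]; simp only [norm_mul, Real.norm_eq_abs]
            rw [abs_of_nonneg hrw]
        _ ≤ B * ((2 * K - Real.log (r - rb)) + D) :=
            mul_le_mul hBr hlogbd (abs_nonneg _) hB0
    -- FTC
    have e1 : ∫ r in t..rb, f r = G rb - G t := by
      refine intervalIntegral.integral_eq_sub_of_hasDeriv_right_of_le hlt.le
        hGcont.continuousOn (fun x hx => ?_) hint1
      exact (hGderiv x hx.1 (lt_trans hx.2 hrb2) (ne_of_lt hx.2)).hasDerivWithinAt
    have e2 : ∫ r in rb..(2 * R₀), f r = G (2 * R₀) - G rb := by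
      refine intervalIntegral.integral_eq_sub_of_hasDeriv_right_of_le hrb2.le
        hGcont.continuousOn (fun x hx => ?_) hint2
      exact (hGderiv x (lt_trans hlt hx.1) hx.2 (ne_of_gt hx.1)).hasDerivWithinAt
    rw [← intervalIntegral.integral_add_adjacent_intervals hint1 hint2, e1, e2]
    have hGt : G t = 0 := by
      rw [hG]
      simp only
      rw [show t ^ 2 - t ^ 2 = 0 by ring, Real.sqrt_zero]
      rw [show (0:ℝ) - s = -s by ring, Real.log_neg_eq_log]
      ring
    have hG2R : G (2 * R₀) = (A - s) * Real.log (A - s) + (A + s) * Real.log (A + s) -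
        2 * A := by
      rw [hG]
      simp only
      rw [show (2 * R₀) ^ 2 - t ^ 2 = 4 * R₀ ^ 2 - t ^ 2 by ring, ← hA]
    have hAspos : 0 < A - s := by linarith
    have hApspos : 0 < A + s := by linarith
    have hfactor : 4 * R₀ ^ 2 - rb ^ 2 = (A - s) * (A + s) := by nlinarith
    rw [hGt, hG2R, hfactor, Real.log_mul (ne_of_gt hAspos) (ne_of_gt hApspos),
      Real.log_div (ne_of_gt hApspos) (ne_of_gt hAspos)]
    ring
  · -- case rb < t
    rw [if_neg (not_lt.2 hgt.le)]
    have hd2 : (Real.sqrt (t ^ 2 - rb ^ 2)) ^ 2 = t ^ 2 - rb ^ 2 :=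
      Real.sq_sqrt (by nlinarith)
    have hdpos : 0 < Real.sqrt (t ^ 2 - rb ^ 2) := Real.sqrt_pos.2 (by nlinarith)
    set d := Real.sqrt (t ^ 2 - rb ^ 2) with hddef
    set G : ℝ → ℝ := fun r =>
      Real.sqrt (r ^ 2 - t ^ 2) * Real.log (r ^ 2 - rb ^ 2) -
      2 * Real.sqrt (r ^ 2 - t ^ 2) +
      2 * d * Real.arctan (Real.sqrt (r ^ 2 - t ^ 2) / d) with hG
    have hGcont : ContinuousOn G (Set.Icc t (2 * R₀)) := by
      refine ContinuousOn.add (ContinuousOn.sub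
        (ContinuousOn.mul (contW t).continuousOn
          (ContinuousOn.log (by fun_prop) (fun x hx => ne_of_gt (by nlinarith [hx.1, hx.2]))))
        (continuous_const.mul (contW t)).continuousOn)
        (continuous_const.mul
          (Real.continuous_arctan.comp ((contW t).div_const d))).continuousOn
    have hGderiv : ∀ x, t < x → x < 2 * R₀ → HasDerivAt G (f x) x := by
      intro x hx1 hx2
      have hx2' : t ^ 2 < x ^ 2 := by nlinarith
      have hw2 : (Real.sqrt (x ^ 2 - t ^ 2)) ^ 2 = x ^ 2 - t ^ 2 :=
        Real.sq_sqrt (by nlinarith)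
      have hwpos : 0 < Real.sqrt (x ^ 2 - t ^ 2) := Real.sqrt_pos.2 (by nlinarith)
      set w := Real.sqrt (x ^ 2 - t ^ 2) with hwdef
      have hxrb2 : 0 < x ^ 2 - rb ^ 2 := by nlinarith
      have hwD : HasDerivAt (fun y : ℝ => Real.sqrt (y ^ 2 - t ^ 2)) (x / w) x :=
        hasDerivAt_w hx2'
      have hlogD : HasDerivAt (fun y : ℝ => Real.log (y ^ 2 - rb ^ 2))
          (2 * x / (x ^ 2 - rb ^ 2)) x := by
        have h1 : HasDerivAt (fun y : ℝ => y ^ 2 - rb ^ 2) (2 * x) x := by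
          simpa using (hasDerivAt_pow 2 x).sub_const (rb ^ 2)
        have h2 := (Real.hasDerivAt_log (ne_of_gt hxrb2)).comp x h1
        refine h2.congr_deriv ?_
        field_simp
      have hatanD := (Real.hasDerivAt_arctan (w / d)).comp x (hwD.div_const d)
      have h3 := ((hwD.mul hlogD).sub (hwD.const_mul 2)).add (hatanD.const_mul (2 * d))
      have h4 : HasDerivAt G
          ((x / w) * Real.log (x ^ 2 - rb ^ 2) + w * (2 * x / (x ^ 2 - rb ^ 2)) -
            2 * (x / w) + 2 * d * (1 / (1 + (w / d) ^ 2) * (x / w / d))) x := h3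
      have hw0 : w ≠ 0 := ne_of_gt hwpos
      have hd0 : d ≠ 0 := ne_of_gt hdpos
      have hS0 : x ^ 2 - rb ^ 2 ≠ 0 := ne_of_gt hxrb2
      have hsum : w ^ 2 + d ^ 2 = x ^ 2 - rb ^ 2 := by rw [hw2, hd2]; ring
      have h1p : 1 + (w / d) ^ 2 = (x ^ 2 - rb ^ 2) / d ^ 2 := by
        field_simp
        linarith [hsum]
      convert h4 using 1
      rw [hf]
      simp only
      rw [← hwdef, h1p]
      field_simp
      linear_combination (-2*x) * hsum
    have hint : IntervalIntegrable f volume t (2 * R₀) := by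
      obtain ⟨C, hC⟩ := (isCompact_Icc (a := t) (b := 2 * R₀)).exists_bound_of_continuousOn
        (f := fun r : ℝ => Real.log (r ^ 2 - rb ^ 2))
        (ContinuousOn.log (by fun_prop) (fun x hx => ne_of_gt (by nlinarith [hx.1, hx.2])))
      refine ((intInt_w ht ht2.le).const_mul C).mono_fun'
        (hfm.aestronglyMeasurable.restrict) ?_
      filter_upwards [MeasureTheory.ae_restrict_mem measurableSet_uIoc] with r hr
      rw [Set.uIoc_of_le ht2.le] at hr
      have hr1 : t < r := hr.1
      have hr2 : r ≤ 2 * R₀ := hr.2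
      have hwpos : 0 < Real.sqrt (r ^ 2 - t ^ 2) := Real.sqrt_pos.2 (by nlinarith)
      have hrw : 0 ≤ r / Real.sqrt (r ^ 2 - t ^ 2) :=
        div_nonneg (by linarith) (Real.sqrt_nonneg _)
      have hCr := hC r ⟨hr1.le, hr2⟩
      rw [Real.norm_eq_abs] at hCr
      calc ‖f r‖ = (r / Real.sqrt (r ^ 2 - t ^ 2)) * |Real.log (r ^ 2 - rb ^ 2)| := by
            rw [hf]; simp only [norm_mul, Real.norm_eq_abs]
            rw [abs_of_nonneg hrw]
        _ ≤ (r / Real.sqrt (r ^ 2 - t ^ 2)) * C := mul_le_mul_of_nonneg_left hCr hrw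
        _ = C * (r / Real.sqrt (r ^ 2 - t ^ 2)) := by ring
    have e1 : ∫ r in t..(2 * R₀), f r = G (2 * R₀) - G t := by
      refine intervalIntegral.integral_eq_sub_of_hasDeriv_right_of_le ht2.le
        hGcont (fun x hx => ?_) hint
      exact (hGderiv x hx.1 hx.2).hasDerivWithinAt
    rw [e1]
    have hGt : G t = 0 := by
      rw [hG]
      simp only
      rw [show t ^ 2 - t ^ 2 = 0 by ring, Real.sqrt_zero]
      simp
    have hG2R : G (2 * R₀) = A * Real.log (4 * R₀ ^ 2 - rb ^ 2) - 2 * A +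
        2 * d * Real.arctan (A / d) := by
      rw [hG]
      simp only
      rw [show (2 * R₀) ^ 2 - t ^ 2 = 4 * R₀ ^ 2 - t ^ 2 by ring,
        show (2 * R₀) ^ 2 - rb ^ 2 = 4 * R₀ ^ 2 - rb ^ 2 by ring, ← hA]
    have hquot : Real.sqrt ((4 * R₀ ^ 2 - t ^ 2) / (t ^ 2 - rb ^ 2)) = A / d := by
      rw [Real.sqrt_div (by nlinarith) _, ← hA, ← hddef]
    rw [hGt, hG2R, hquot]
    ring
end
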